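/- For $r \geq 3$ even and $n \geq 3$, the poset $\mathrm{Hom}_p(C_r, K_n)$ of $r$-tuples $(A_1,\dots,A_r)$ of nonempty subsets of $[n]$ with $A_i \cap A_{i+1} = \emptyset$ (indices mod $r$), ordered componentwise by inclusion, contains a chain of length at least $\frac{r}{2}(n-2)$; hence $\dim(\mathrm{Hom}_p(C_r,K_n)) \geq \lceil r/2 \rceil (n-2)$. -/

import Mathlib

/-- The poset `Hom_p(C_r, K_n)`: `r`-tuples of nonempty subsets of `[n]` assigning
disjoint sets to cyclically adjacent indices, ordered componentwise by inclusion. -/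
def CycHom (r n : ℕ) [NeZero r] : Type :=
  {A : Fin r → Finset (Fin n) //
    (∀ i, (A i).Nonempty) ∧ ∀ i : Fin r, Disjoint (A i) (A (i + 1))}

/-- For `r ≥ 3` even and `n ≥ 3`, the poset `Hom_p(C_r, K_n)` contains a chain of
length at least `(r/2)(n-2)`, i.e. a strictly increasing list of at least
`(r/2)(n-2) + 1` elements; hence `dim Hom_p(C_r, K_n) ≥ ⌈r/2⌉(n-2)`. -/
theorem cycHom_long_chain (r n : ℕ) [NeZero r] (hr : 3 ≤ r) (hreven : Even r)
    (hn : 3 ≤ n) :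
    ∃ l : List (CycHom r n),
      l.Chain' (fun A B => (∀ i, A.val i ⊆ B.val i) ∧ A.val ≠ B.val) ∧
      r / 2 * (n - 2) + 1 ≤ l.length := by
  have hn0 : 0 < n := by omega
  have hr2 : r % 2 = 0 := Nat.even_iff.mp hreven
  set m := n - 2 with hm
  have hm1 : 1 ≤ m := by omega
  set g : ℕ → ℕ → ℕ := fun k j => min m (k - j * m) with hg
  set S : ℕ → Finset (Fin n) := fun t =>
    Finset.univ.filter (fun x => x.val = 0 ∨ (2 ≤ x.val ∧ x.val < 2 + t)) with hS
  have hmemS : ∀ t (x : Fin n), x ∈ S t ↔ (x.val = 0 ∨ (2 ≤ x.val ∧ x.val < 2 + t)) := by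
    intro t x; simp [hS]
  set A : ℕ → Fin r → Finset (Fin n) := fun k i =>
    if i.val % 2 = 1 then {⟨1, by omega⟩} else S (g k (i.val / 2)) with hA
  have hpar : ∀ i : Fin r, (i + 1).val % 2 = (i.val + 1) % 2 := by
    intro i
    have h1 : (i + 1).val = (i.val + 1) % r := by
      rw [Fin.add_def]
      congr 1
      simp [Fin.val_one', Nat.mod_eq_of_lt (show 1 < r by omega)]
    rw [h1, Nat.mod_mod_of_dvd _ (by omega : 2 ∣ r)]
  have hdisj : ∀ k i, Disjoint (A k i) (A k (i + 1)) := by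
    intro k i
    have hp := hpar i
    rcases Nat.eq_zero_or_pos (i.val % 2) with h | h
    · have h1 : (i + 1).val % 2 = 1 := by omega
      simp only [hA]
      rw [if_neg (by omega), if_pos h1, Finset.disjoint_singleton_right, hmemS]
      simp
    · have h0 : i.val % 2 = 1 := by omega
      simp only [hA]
      rw [if_pos h0, if_neg (by omega), Finset.disjoint_singleton_left, hmemS]
      simp
  have hne : ∀ k i, (A k i).Nonempty := by
    intro k i
    by_cases h : i.val % 2 = 1
    · simp [hA, h]
    · refine ⟨⟨0, hn0⟩, ?_⟩
      simp only [hA, if_neg h]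
      rw [hmemS]
      left; rfl
  set E : ℕ → CycHom r n := fun k => ⟨A k, hne k, hdisj k⟩ with hE
  refine ⟨(List.range (r / 2 * m + 1)).map E, ?_, by simp⟩
  show List.IsChain _ _
  rw [List.isChain_map, List.isChain_range_succ]
  intro k hk
  constructor
  · intro i
    show A k i ⊆ A (k + 1) i
    by_cases h : i.val % 2 = 1
    · simp [hA, h]
    · simp only [hA, if_neg h]
      intro x hx
      rw [hmemS] at hx ⊢
      rcases hx with h0 | ⟨h2, h3⟩
      · exact Or.inl h0
      · right
        refine ⟨h2, ?_⟩
        have hgm : g k (i.val / 2) ≤ g (k + 1) (i.val / 2) := by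
          simp only [hg]; omega
        omega
  · show A k ≠ A (k + 1)
    obtain ⟨j, s, hsm, hks⟩ : ∃ j s, s < m ∧ k = j * m + s :=
      ⟨k / m, k % m, Nat.mod_lt _ (by omega), by
        rw [Nat.mul_comm]; exact (Nat.div_add_mod k m).symm⟩
    have hjm : j * m < r / 2 * m := by omega
    have hjlt : j < r / 2 := Nat.lt_of_mul_lt_mul_right hjm
    have h2j : 2 * j < r := by omega
    have hgk : g k j = s := by simp only [hg]; omega
    have hgk1 : g (k + 1) j = s + 1 := by simp only [hg]; omega
    have hsn : 2 + s < n := by omega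
    have hx1 : (⟨2 + s, hsn⟩ : Fin n) ∈ S (s + 1) := by
      rw [hmemS]; right; exact ⟨by simp, by simp⟩
    have hx0 : (⟨2 + s, hsn⟩ : Fin n) ∉ S s := by
      rw [hmemS]; push_neg
      refine ⟨by simp, fun _ => by simp⟩
    intro heq
    have hc := congrFun heq (⟨2 * j, h2j⟩ : Fin r)
    simp only [hA] at hc
    rw [if_neg (by omega : ¬ (2 * j) % 2 = 1)] at hc
    have hdiv : 2 * j / 2 = j := by omega
    rw [hdiv, hgk, hgk1] at hc
    rw [if_neg (by omega : ¬ (2 * j) % 2 = 1)] at hc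
    rw [← hc] at hx1
    exact hx0 hx1
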